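/- The number of derangements D(n) of [n] satisfies D(n) = #{σ ∈ C_n : Θ_n(σ) = ∅} + #{σ ∈ C_{n+1} : Θ_{n+1}(σ) = ∅}, where C_j is the set of j-cycles in S_j and Θ_j(σ) = {k ∈ [j] : σ(k) = k+1 mod j}. -/

import Mathlib

/-- The successor `k+1 mod n`, taking values in `Fin n`. -/
def cyclicSucc {n : ℕ} (j : Fin n) : Fin n := ⟨((j : ℕ) + 1) % n, Nat.mod_lt _ j.pos⟩

/-- `σ` consists of a single cycle through all of `Fin n` (an `n`-cycle). -/
def IsFullCycle {n : ℕ} (σ : Equiv.Perm (Fin n)) : Prop :=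
  ∀ x y : Fin n, ∃ i : ℕ, (σ ^ i) x = y

open Equiv Finset Nat
open Fin.NatCast Fin.CommRing

attribute [local instance] Classical.propDecidable

namespace Stmt13Aux

/-- `σ` is a single cycle through all of `α`. -/
def FullOn {α : Type*} (σ : Equiv.Perm α) : Prop := ∀ x y : α, ∃ i : ℕ, (σ ^ i) x = y

theorem FullOn.card_le {α : Type*} [Fintype α] {σ : Equiv.Perm α} (h : FullOn σ) (b : α)
    {k : ℕ} (hk0 : 0 < k) (hk : (σ ^ k) b = b) : Fintype.card α ≤ k := by
  have hper : ∀ q a : ℕ, (σ ^ (a + q * k)) b = (σ ^ a) b := by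
    intro q
    induction q with
    | zero => simp
    | succ q ih =>
      intro a
      have h1 : a + (q + 1) * k = (a + q * k) + k := by ring
      rw [h1, pow_add, Equiv.Perm.mul_apply, hk, ih a]
  have hsurj : Function.Surjective (fun j : Fin k => (σ ^ (j : ℕ)) b) := by
    intro y
    obtain ⟨i, hi⟩ := h b y
    refine ⟨⟨i % k, Nat.mod_lt _ hk0⟩, ?_⟩
    have h2 : i % k + (i / k) * k = i := Nat.mod_add_div' i k
    have h3 := hper (i / k) (i % k)
    rw [h2] at h3
    show (σ ^ (i % k)) b = y
    rw [← hi]; exact h3.symm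
  simpa using Fintype.card_le_of_surjective _ hsurj

variable {α : Type*} [Fintype α]

theorem FullOn.pow_inj {σ : Equiv.Perm α} (hσ : FullOn σ) (b : α) {m : ℕ}
    (hm : Fintype.card α = m + 1) {i j : ℕ} (hij : i ≤ j) (hj : j < m + 1)
    (hb : (σ ^ i) b = (σ ^ j) b) : i = j := by
  by_contra hne
  have hd : 0 < j - i := by omega
  have h1 : (σ ^ (j - i)) b = b := by
    have h2 : (σ ^ i) ((σ ^ (j - i)) b) = (σ ^ i) b := by
      rw [← Equiv.Perm.mul_apply, ← pow_add, show i + (j - i) = j by omega, hb]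
    exact (σ ^ i).injective h2
  have := hσ.card_le b hd h1
  omega

/-- The enumeration of `α` given by following a full cycle from `b`. -/
noncomputable def fullEnum {m : ℕ} (hm : Fintype.card α = m + 1) (b : α)
    {σ : Equiv.Perm α} (hσ : FullOn σ) : Fin (m + 1) ≃ α :=
  Equiv.ofBijective (fun i => (σ ^ (i : ℕ)) b) (by
    rw [Fintype.bijective_iff_injective_and_card]
    refine ⟨?_, by simp [hm]⟩
    intro i j hb
    rcases le_total (i : ℕ) (j : ℕ) with hle | hle
    · exact Fin.ext (hσ.pow_inj b hm hle j.isLt hb)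
    · exact (Fin.ext (hσ.pow_inj b hm hle i.isLt hb.symm)).symm)

theorem fullEnum_apply {m : ℕ} (hm : Fintype.card α = m + 1) (b : α)
    {σ : Equiv.Perm α} (hσ : FullOn σ) (i : Fin (m + 1)) :
    fullEnum hm b hσ i = (σ ^ (i : ℕ)) b := rfl

theorem pow_card_fix {m : ℕ} (hm : Fintype.card α = m + 1) (b : α)
    {σ : Equiv.Perm α} (hσ : FullOn σ) : (σ ^ (m + 1)) b = b := by
  obtain ⟨j, hj⟩ := (fullEnum hm b hσ).surjective ((σ ^ (m + 1)) b)
  rw [fullEnum_apply] at hj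
  rcases Nat.eq_zero_or_pos (j : ℕ) with h0 | h0
  · rw [← hj, h0]; simp
  · exfalso
    have h1 : (σ ^ (j : ℕ)) ((σ ^ (m + 1 - (j : ℕ))) b) = (σ ^ (j : ℕ)) b := by
      rw [← Equiv.Perm.mul_apply, ← pow_add, show (j : ℕ) + (m + 1 - (j : ℕ)) = m + 1 by omega, hj]
    have h2 := hσ.card_le b (k := m + 1 - (j : ℕ)) (by omega) ((σ ^ (j : ℕ)).injective h1)
    omega

/-- Equivalences sending `b` to `c` correspond to equivalences of the complements. -/
noncomputable def pointedEquiv {β γ : Type*} (b : β) (c : γ) :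
    {f : β ≃ γ // f b = c} ≃ ({x : β // x ≠ b} ≃ {y : γ // y ≠ c}) where
  toFun F := Equiv.subtypeEquiv F.1 (fun x => by
    constructor
    · intro hx hFx; exact hx (F.1.injective (hFx.trans F.2.symm))
    · intro hFx hx; exact hFx (hx ▸ F.2))
  invFun G := ⟨{ toFun := fun x => if h : x = b then c else (G ⟨x, h⟩ : γ)
                 invFun := fun y => if h : y = c then b else (G.symm ⟨y, h⟩ : β)
                 left_inv := by
                   intro x
                   by_cases h : x = b
                   · simp [h]
                   · simp only [dif_neg h, dif_neg (G ⟨x, h⟩).2, Subtype.coe_eta,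
                       Equiv.symm_apply_apply]
                 right_inv := by
                   intro y
                   by_cases h : y = c
                   · simp [h]
                   · simp only [dif_neg h, dif_neg (G.symm ⟨y, h⟩).2, Subtype.coe_eta,
                       Equiv.apply_symm_apply] },
              by simp⟩
  left_inv := by
    rintro ⟨f, hf⟩
    apply Subtype.ext
    apply Equiv.ext
    intro x
    by_cases h : x = b
    · simp [h, hf]
    · simp [h, Equiv.subtypeEquiv]
  right_inv := by
    intro G
    apply Equiv.ext
    rintro ⟨x, hx⟩
    apply Subtype.ext
    simp [Equiv.subtypeEquiv, hx]


theorem conj_pow_apply {m : ℕ} {α : Type*} (f : Fin (m + 1) ≃ α) (k : ℕ) (x : α) :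
    ((((f.symm.trans (finRotate (m + 1))).trans f : Equiv.Perm α)) ^ k) x
      = f (f.symm x + (k : Fin (m + 1))) := by
  induction k with
  | zero => simp
  | succ k ih =>
    rw [_root_.pow_succ', Equiv.Perm.mul_apply, ih]
    simp only [Equiv.trans_apply, Equiv.symm_apply_apply, finRotate_succ_apply]
    congr 1
    push_cast
    ring

noncomputable def fullOnEquivPointed {m : ℕ} (hm : Fintype.card α = m + 1) (b : α) :
    {σ : Equiv.Perm α // FullOn σ} ≃ {f : Fin (m + 1) ≃ α // f 0 = b} where
  toFun σh := ⟨fullEnum hm b σh.2, by rw [fullEnum_apply]; simp⟩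
  invFun fh := ⟨(fh.1.symm.trans (finRotate (m + 1))).trans fh.1, by
    intro x y
    refine ⟨((fh.1.symm y - fh.1.symm x : Fin (m + 1)) : ℕ), ?_⟩
    rw [conj_pow_apply, Fin.cast_val_eq_self]
    have h1 : fh.1.symm x + (fh.1.symm y - fh.1.symm x) = fh.1.symm y := by ring
    rw [h1, Equiv.apply_symm_apply]⟩
  left_inv := by
    rintro ⟨σ, hσ⟩
    apply Subtype.ext
    apply Equiv.ext
    intro x
    set f := fullEnum hm b hσ with hfdef
    set i := f.symm x with hidef
    have hx : (σ ^ (i : ℕ)) b = x := by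
      rw [← fullEnum_apply hm b hσ i, ← hfdef, hidef, Equiv.apply_symm_apply]
    show f (finRotate (m + 1) i) = σ x
    rcases Nat.lt_or_ge (i : ℕ) m with hlt | hge
    · have h2 : ((i + 1 : Fin (m + 1)) : ℕ) = (i : ℕ) + 1 :=
        Fin.val_add_one_of_lt (by simpa [Fin.lt_iff_val_lt_val] using hlt)
      rw [finRotate_succ_apply]
      rw [show f (i + 1) = (σ ^ ((i + 1 : Fin (m+1)) : ℕ)) b from rfl, h2, _root_.pow_succ',
        Equiv.Perm.mul_apply, hx]
    · have hieq : i = Fin.last m := by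
        apply Fin.ext
        have := i.isLt
        simp only [Fin.val_last]
        omega
      rw [hieq, finRotate_last]
      show (σ ^ ((0 : Fin (m+1)) : ℕ)) b = σ x
      rw [← hx, hieq]
      simp only [Fin.val_last, Fin.val_zero, pow_zero, Equiv.Perm.one_apply]
      rw [← Equiv.Perm.mul_apply, ← _root_.pow_succ']
      exact (pow_card_fix hm b hσ).symm
  right_inv := by
    rintro ⟨f, hf⟩
    apply Subtype.ext
    apply Equiv.ext
    intro i
    rw [fullEnum_apply, conj_pow_apply, Fin.cast_val_eq_self]
    have h0 : f.symm b = 0 := by rw [← hf, Equiv.symm_apply_apply]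
    rw [h0, zero_add]

theorem card_fullOn (b : α) :
    Nat.card {σ : Equiv.Perm α // FullOn σ} = (Fintype.card α - 1)! := by
  obtain ⟨m, hm⟩ : ∃ m, Fintype.card α = m + 1 :=
    ⟨Fintype.card α - 1, (Nat.succ_pred_eq_of_pos (Fintype.card_pos_iff.mpr ⟨b⟩)).symm⟩
  rw [Nat.card_congr ((fullOnEquivPointed hm b).trans (pointedEquiv 0 b)), hm]
  have h1 : Fintype.card {x : α // x ≠ b} = m := by
    have := Set.card_ne_eq b (α := α)
    simp only [hm] at this
    have h2 : Fintype.card {x : α // x ≠ b} = Fintype.card {x : α | x ≠ b} :=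
      Fintype.card_congr (Equiv.subtypeEquivRight (fun x => Iff.rfl))
    rw [h2, this]
    omega
  have h3 : Fintype.card {i : Fin (m + 1) // i ≠ 0} = m := by
    have := Set.card_ne_eq (0 : Fin (m + 1))
    have h2 : Fintype.card {i : Fin (m + 1) // i ≠ 0}
        = Fintype.card {i : Fin (m + 1) | i ≠ 0} :=
      Fintype.card_congr (Equiv.subtypeEquivRight (fun x => Iff.rfl))
    rw [h2, this]
    simp
  rw [Nat.card_congr (Equiv.equivCongr (Fintype.equivFinOfCardEq h3)
    (Fintype.equivFinOfCardEq h1))]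
  show Nat.card (Equiv.Perm (Fin m)) = (m + 1 - 1)!
  rw [Nat.card_eq_fintype_card, Fintype.card_perm, Fintype.card_fin]
  simp


theorem cyclicSucc_eq {m : ℕ} (j : Fin (m + 1)) : cyclicSucc j = j + 1 := by
  apply Fin.ext
  show ((j : ℕ) + 1) % (m + 1) = ((j : ℕ) + (1 : Fin (m + 1)).val) % (m + 1)
  rw [Fin.val_one', Nat.add_mod ((j : ℕ)) 1, Nat.mod_eq_of_lt j.isLt]

section Contract

variable {n : ℕ} (T : Finset (Fin (n + 1))) (s₀ : Fin (n + 1)) (hs₀ : s₀ ∉ T)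

include hs₀

theorem dexists (x : Fin (n + 1)) : ∃ d : ℕ, x + ((d : ℕ) : Fin (n + 1)) ∉ T := by
  refine ⟨((s₀ - x).val : ℕ), ?_⟩
  rw [Fin.cast_val_eq_self]
  have h : x + (s₀ - x) = s₀ := by ring
  rw [h]
  exact hs₀

noncomputable def dfun (x : Fin (n + 1)) : ℕ := Nat.find (dexists T s₀ hs₀ x)

noncomputable def endpt (x : Fin (n + 1)) : Fin (n + 1) := x + ((dfun T s₀ hs₀ x : ℕ) : Fin (n + 1))

theorem endpt_not_mem (x : Fin (n + 1)) : endpt T s₀ hs₀ x ∉ T := Nat.find_spec (dexists T s₀ hs₀ x)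

theorem mem_of_lt_dfun {x : Fin (n + 1)} {e : ℕ} (h : e < dfun T s₀ hs₀ x) :
    x + ((e : ℕ) : Fin (n + 1)) ∈ T := not_not.mp (Nat.find_min (dexists T s₀ hs₀ x) h)

theorem dfun_of_not_mem {x : Fin (n + 1)} (h : x ∉ T) : dfun T s₀ hs₀ x = 0 := by
  rw [dfun, Nat.find_eq_zero]
  simpa using h

theorem endpt_of_not_mem {x : Fin (n + 1)} (h : x ∉ T) : endpt T s₀ hs₀ x = x := by
  rw [endpt, dfun_of_not_mem T s₀ hs₀ h]
  simp

theorem dfun_of_mem {x : Fin (n + 1)} (h : x ∈ T) :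
    dfun T s₀ hs₀ x = dfun T s₀ hs₀ (x + 1) + 1 := by
  have h0 : dfun T s₀ hs₀ x ≠ 0 := by
    intro h0
    have := endpt_not_mem T s₀ hs₀ x
    rw [endpt, h0] at this
    simp only [Nat.cast_zero, add_zero] at this
    exact this h
  apply le_antisymm
  · apply Nat.find_le
    show x + (((dfun T s₀ hs₀ (x + 1) + 1 : ℕ) : ℕ) : Fin (n + 1)) ∉ T
    have he : x + (((dfun T s₀ hs₀ (x + 1) + 1 : ℕ) : ℕ) : Fin (n + 1))
        = (x + 1) + ((dfun T s₀ hs₀ (x + 1) : ℕ) : Fin (n + 1)) := by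
      push_cast
      ring
    rw [he]
    exact endpt_not_mem T s₀ hs₀ (x + 1)
  · have h1 : dfun T s₀ hs₀ (x + 1) ≤ dfun T s₀ hs₀ x - 1 := by
      apply Nat.find_le
      show (x + 1) + (((dfun T s₀ hs₀ x - 1 : ℕ) : ℕ) : Fin (n + 1)) ∉ T
      have he : (x + 1) + (((dfun T s₀ hs₀ x - 1 : ℕ) : ℕ) : Fin (n + 1))
          = x + ((dfun T s₀ hs₀ x : ℕ) : Fin (n + 1)) := by
        conv_rhs => rw [show (dfun T s₀ hs₀ x : ℕ) = (dfun T s₀ hs₀ x - 1) + 1 from by omega]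
        push_cast
        ring
      rw [he]
      exact endpt_not_mem T s₀ hs₀ x
    omega

theorem endpt_succ {x : Fin (n + 1)} (h : x ∈ T) :
    endpt T s₀ hs₀ (x + 1) = endpt T s₀ hs₀ x := by
  rw [endpt, endpt, dfun_of_mem T s₀ hs₀ h]
  push_cast
  ring

theorem uexists (y : Fin (n + 1)) : ∃ u : ℕ, y - (((u : ℕ) : Fin (n + 1)) + 1) ∉ T := by
  refine ⟨((y - 1 - s₀).val : ℕ), ?_⟩
  rw [Fin.cast_val_eq_self]
  have h : y - ((y - 1 - s₀) + 1) = s₀ := by ring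
  rw [h]
  exact hs₀

noncomputable def ufun (y : Fin (n + 1)) : ℕ := Nat.find (uexists T s₀ hs₀ y)

noncomputable def startpt (y : Fin (n + 1)) : Fin (n + 1) := y - ((ufun T s₀ hs₀ y : ℕ) : Fin (n + 1))

theorem sub_ufun_not_mem (y : Fin (n + 1)) :
    y - (((ufun T s₀ hs₀ y : ℕ) : Fin (n + 1)) + 1) ∉ T := Nat.find_spec (uexists T s₀ hs₀ y)

theorem mem_of_lt_ufun {y : Fin (n + 1)} {u : ℕ} (h : u < ufun T s₀ hs₀ y) :
    y - (((u : ℕ) : Fin (n + 1)) + 1) ∈ T := not_not.mp (Nat.find_min (uexists T s₀ hs₀ y) h)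

theorem startpt_sub_one_not_mem (y : Fin (n + 1)) : startpt T s₀ hs₀ y - 1 ∉ T := by
  have h := sub_ufun_not_mem T s₀ hs₀ y
  have he : y - (((ufun T s₀ hs₀ y : ℕ) : Fin (n + 1)) + 1) = startpt T s₀ hs₀ y - 1 := by
    rw [startpt]; ring
  rwa [he] at h

theorem dfun_startpt {y : Fin (n + 1)} (hy : y ∉ T) :
    dfun T s₀ hs₀ (startpt T s₀ hs₀ y) = ufun T s₀ hs₀ y := by
  apply le_antisymm
  · apply Nat.find_le
    show startpt T s₀ hs₀ y + ((ufun T s₀ hs₀ y : ℕ) : Fin (n + 1)) ∉ T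
    have he : startpt T s₀ hs₀ y + ((ufun T s₀ hs₀ y : ℕ) : Fin (n + 1)) = y := by
      rw [startpt]; ring
    rwa [he]
  · by_contra hlt
    push_neg at hlt
    set d := dfun T s₀ hs₀ (startpt T s₀ hs₀ y) with hd
    have h1 : startpt T s₀ hs₀ y + ((d : ℕ) : Fin (n + 1)) ∉ T := endpt_not_mem T s₀ hs₀ _
    have he : startpt T s₀ hs₀ y + ((d : ℕ) : Fin (n + 1))
        = y - ((((ufun T s₀ hs₀ y - d - 1 : ℕ) : ℕ) : Fin (n + 1)) + 1) := by
      rw [Nat.cast_sub (by omega), Nat.cast_sub (by omega), Nat.cast_one, startpt]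
      ring
    exact h1 (he ▸ mem_of_lt_ufun T s₀ hs₀ (by omega))

theorem endpt_startpt {y : Fin (n + 1)} (hy : y ∉ T) :
    endpt T s₀ hs₀ (startpt T s₀ hs₀ y) = y := by
  rw [endpt, dfun_startpt T s₀ hs₀ hy, startpt]
  ring

theorem ufun_endpt {x : Fin (n + 1)} (hx : x - 1 ∉ T) :
    ufun T s₀ hs₀ (endpt T s₀ hs₀ x) = dfun T s₀ hs₀ x := by
  apply le_antisymm
  · apply Nat.find_le
    show endpt T s₀ hs₀ x - (((dfun T s₀ hs₀ x : ℕ) : Fin (n + 1)) + 1) ∉ T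
    have he : endpt T s₀ hs₀ x - (((dfun T s₀ hs₀ x : ℕ) : Fin (n + 1)) + 1) = x - 1 := by
      rw [endpt]; ring
    rwa [he]
  · by_contra hlt
    push_neg at hlt
    set u := ufun T s₀ hs₀ (endpt T s₀ hs₀ x) with hu
    have h1 : endpt T s₀ hs₀ x - (((u : ℕ) : Fin (n + 1)) + 1) ∉ T := sub_ufun_not_mem T s₀ hs₀ _
    have he : endpt T s₀ hs₀ x - (((u : ℕ) : Fin (n + 1)) + 1)
        = x + (((dfun T s₀ hs₀ x - u - 1 : ℕ) : ℕ) : Fin (n + 1)) := by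
      rw [Nat.cast_sub (by omega), Nat.cast_sub (by omega), Nat.cast_one, endpt]
      ring
    exact h1 (he ▸ mem_of_lt_dfun T s₀ hs₀ (by omega))

theorem startpt_endpt {x : Fin (n + 1)} (hx : x - 1 ∉ T) :
    startpt T s₀ hs₀ (endpt T s₀ hs₀ x) = x := by
  rw [startpt, ufun_endpt T s₀ hs₀ hx, endpt]
  ring

theorem pow_eq_add {σ : Equiv.Perm (Fin (n + 1))} (harc : ∀ i ∈ T, σ i = i + 1)
    (x : Fin (n + 1)) : ∀ k : ℕ, k ≤ dfun T s₀ hs₀ x → (σ ^ k) x = x + ((k : ℕ) : Fin (n + 1)) := by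
  intro k
  induction k with
  | zero => intro _; simp
  | succ k ih =>
    intro hk
    rw [_root_.pow_succ', Equiv.Perm.mul_apply, ih (by omega),
      harc _ (mem_of_lt_dfun T s₀ hs₀ (by omega))]
    push_cast
    ring

theorem pow_dfun_eq_endpt {σ : Equiv.Perm (Fin (n + 1))} (harc : ∀ i ∈ T, σ i = i + 1)
    (x : Fin (n + 1)) : (σ ^ dfun T s₀ hs₀ x) x = endpt T s₀ hs₀ x :=
  pow_eq_add T s₀ hs₀ harc x _ le_rfl

theorem pred_image_not_mem {σ : Equiv.Perm (Fin (n + 1))} (harc : ∀ i ∈ T, σ i = i + 1)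
    {x : Fin (n + 1)} (hx : x ∉ T) : σ x - 1 ∉ T := by
  intro hmem
  have h1 : σ (σ x - 1) = σ x := by rw [harc _ hmem]; ring
  have h2 : σ x - 1 = x := σ.injective h1
  rw [h2] at hmem
  exact hx hmem

noncomputable def contractPerm {σ : Equiv.Perm (Fin (n + 1))} (harc : ∀ i ∈ T, σ i = i + 1) :
    Equiv.Perm {x : Fin (n + 1) // x ∉ T} :=
  Equiv.ofBijective (fun s => ⟨endpt T s₀ hs₀ (σ s.1), endpt_not_mem T s₀ hs₀ _⟩)
    (Finite.injective_iff_bijective.mp (by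
      intro s t hst
      have h1 : endpt T s₀ hs₀ (σ s.1) = endpt T s₀ hs₀ (σ t.1) := congrArg Subtype.val hst
      have h2 : σ s.1 = σ t.1 := by
        rw [← startpt_endpt T s₀ hs₀ (pred_image_not_mem T s₀ hs₀ harc s.2),
          ← startpt_endpt T s₀ hs₀ (pred_image_not_mem T s₀ hs₀ harc t.2), h1]
      exact Subtype.ext (σ.injective h2)))

theorem contractPerm_apply {σ : Equiv.Perm (Fin (n + 1))} (harc : ∀ i ∈ T, σ i = i + 1)
    (s : {x : Fin (n + 1) // x ∉ T}) :
    (contractPerm T s₀ hs₀ harc s : Fin (n + 1)) = endpt T s₀ hs₀ (σ s.1) := rfl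

theorem contractPerm_fullOn {σ : Equiv.Perm (Fin (n + 1))} (harc : ∀ i ∈ T, σ i = i + 1)
    (hfull : FullOn σ) : FullOn (contractPerm T s₀ hs₀ harc) := by
  have reach : ∀ (i : ℕ) (s : {x : Fin (n + 1) // x ∉ T}), ∃ k : ℕ,
      ((contractPerm T s₀ hs₀ harc ^ k) s : Fin (n + 1)) = endpt T s₀ hs₀ ((σ ^ i) s.1) := by
    intro i
    induction i with
    | zero => intro s; exact ⟨0, by simp [endpt_of_not_mem T s₀ hs₀ s.2]⟩
    | succ i ih =>
      intro s
      obtain ⟨k, hk⟩ := ih s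
      by_cases hy : (σ ^ i) s.1 ∈ T
      · refine ⟨k, ?_⟩
        rw [_root_.pow_succ', Equiv.Perm.mul_apply, harc _ hy, endpt_succ T s₀ hs₀ hy, hk]
      · refine ⟨k + 1, ?_⟩
        have hks : (contractPerm T s₀ hs₀ harc ^ k) s = ⟨(σ ^ i) s.1, hy⟩ :=
          Subtype.ext (by rw [hk, endpt_of_not_mem T s₀ hs₀ hy])
        rw [_root_.pow_succ', Equiv.Perm.mul_apply, hks]
        show endpt T s₀ hs₀ (σ ((σ ^ i) s.1)) = endpt T s₀ hs₀ ((σ ^ (i + 1)) s.1)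
        rw [_root_.pow_succ', Equiv.Perm.mul_apply]
  intro s t
  obtain ⟨i, hi⟩ := hfull s.1 t.1
  obtain ⟨k, hk⟩ := reach i s
  exact ⟨k, Subtype.ext (by rw [hk, hi, endpt_of_not_mem T s₀ hs₀ t.2])⟩

noncomputable def expandPerm (τ : Equiv.Perm {x : Fin (n + 1) // x ∉ T}) :
    Equiv.Perm (Fin (n + 1)) :=
  Equiv.ofBijective (fun x => if hx : x ∈ T then x + 1 else startpt T s₀ hs₀ (τ ⟨x, hx⟩).1)
    (Finite.injective_iff_bijective.mp (by
      intro x y hxy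
      simp only [] at hxy
      by_cases hx : x ∈ T <;> by_cases hy : y ∈ T
      · rw [dif_pos hx, dif_pos hy] at hxy; exact add_right_cancel hxy
      · rw [dif_pos hx, dif_neg hy] at hxy
        exfalso
        have h := startpt_sub_one_not_mem T s₀ hs₀ (τ ⟨y, hy⟩).1
        rw [← hxy] at h
        simp only [add_sub_cancel_right] at h
        exact h hx
      · rw [dif_neg hx, dif_pos hy] at hxy
        exfalso
        have h := startpt_sub_one_not_mem T s₀ hs₀ (τ ⟨x, hx⟩).1
        rw [hxy] at h
        simp only [add_sub_cancel_right] at h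
        exact h hy
      · rw [dif_neg hx, dif_neg hy] at hxy
        have h1 : (τ ⟨x, hx⟩).1 = (τ ⟨y, hy⟩).1 := by
          rw [← endpt_startpt T s₀ hs₀ (τ ⟨x, hx⟩).2,
            ← endpt_startpt T s₀ hs₀ (τ ⟨y, hy⟩).2, hxy]
        exact congrArg Subtype.val (τ.injective (Subtype.ext h1))))

theorem expandPerm_apply_mem (τ : Equiv.Perm {x : Fin (n + 1) // x ∉ T}) {x : Fin (n + 1)}
    (hx : x ∈ T) : expandPerm T s₀ hs₀ τ x = x + 1 := by
  show (if h : x ∈ T then x + 1 else startpt T s₀ hs₀ (τ ⟨x, h⟩).1) = x + 1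
  rw [dif_pos hx]

theorem expandPerm_apply_not_mem (τ : Equiv.Perm {x : Fin (n + 1) // x ∉ T}) {x : Fin (n + 1)}
    (hx : x ∉ T) : expandPerm T s₀ hs₀ τ x = startpt T s₀ hs₀ (τ ⟨x, hx⟩).1 := by
  show (if h : x ∈ T then x + 1 else startpt T s₀ hs₀ (τ ⟨x, h⟩).1) = _
  rw [dif_neg hx]

theorem expandPerm_harc (τ : Equiv.Perm {x : Fin (n + 1) // x ∉ T}) :
    ∀ i ∈ T, expandPerm T s₀ hs₀ τ i = i + 1 := fun _ hi => expandPerm_apply_mem T s₀ hs₀ τ hi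

theorem expand_pow_reach (τ : Equiv.Perm {x : Fin (n + 1) // x ∉ T})
    (s : {x : Fin (n + 1) // x ∉ T}) :
    (expandPerm T s₀ hs₀ τ ^ (ufun T s₀ hs₀ (τ s).1 + 1)) s.1 = (τ s).1 := by
  have h1 : expandPerm T s₀ hs₀ τ s.1 = startpt T s₀ hs₀ (τ s).1 := by
    rw [expandPerm_apply_not_mem T s₀ hs₀ τ s.2, Subtype.coe_eta]
  have h2 := pow_dfun_eq_endpt T s₀ hs₀ (expandPerm_harc T s₀ hs₀ τ)
    (startpt T s₀ hs₀ (τ s).1)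
  rw [dfun_startpt T s₀ hs₀ (τ s).2, endpt_startpt T s₀ hs₀ (τ s).2] at h2
  rw [_root_.pow_succ, Equiv.Perm.mul_apply, h1, h2]

theorem expand_reach (τ : Equiv.Perm {x : Fin (n + 1) // x ∉ T}) (k : ℕ)
    (s : {x : Fin (n + 1) // x ∉ T}) :
    ∃ i : ℕ, (expandPerm T s₀ hs₀ τ ^ i) s.1 = ((τ ^ k) s).1 := by
  induction k with
  | zero => exact ⟨0, rfl⟩
  | succ k ih =>
    obtain ⟨i, hi⟩ := ih
    refine ⟨(ufun T s₀ hs₀ (τ ((τ ^ k) s)).1 + 1) + i, ?_⟩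
    rw [pow_add, Equiv.Perm.mul_apply, hi, expand_pow_reach T s₀ hs₀ τ]
    show (τ ((τ ^ k) s)).1 = ((τ ^ (k + 1)) s).1
    rw [_root_.pow_succ', Equiv.Perm.mul_apply]

theorem expandPerm_fullOn (τ : Equiv.Perm {x : Fin (n + 1) // x ∉ T}) (hτ : FullOn τ) :
    FullOn (expandPerm T s₀ hs₀ τ) := by
  intro x y
  have harc' := expandPerm_harc T s₀ hs₀ τ
  set e := endpt T s₀ hs₀ y with he
  have hy' : e ∉ T := endpt_not_mem T s₀ hs₀ y
  set s : {x : Fin (n + 1) // x ∉ T} := ⟨endpt T s₀ hs₀ x, endpt_not_mem T s₀ hs₀ x⟩ with hs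
  set t : {x : Fin (n + 1) // x ∉ T} := τ.symm ⟨e, hy'⟩ with ht
  have hx1 : (expandPerm T s₀ hs₀ τ ^ dfun T s₀ hs₀ x) x = s.1 :=
    pow_dfun_eq_endpt T s₀ hs₀ harc' x
  obtain ⟨k, hk⟩ := hτ s t
  obtain ⟨i, hi⟩ := expand_reach T s₀ hs₀ τ k s
  have hdu : dfun T s₀ hs₀ y ≤ ufun T s₀ hs₀ e := by
    by_contra hlt
    push_neg at hlt
    have h1 := sub_ufun_not_mem T s₀ hs₀ e
    have he2 : e - (((ufun T s₀ hs₀ e : ℕ) : Fin (n + 1)) + 1)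
        = y + (((dfun T s₀ hs₀ y - ufun T s₀ hs₀ e - 1 : ℕ) : ℕ) : Fin (n + 1)) := by
      rw [Nat.cast_sub (by omega), Nat.cast_sub (by omega), Nat.cast_one, he, endpt]
      ring
    exact h1 (he2 ▸ mem_of_lt_dfun T s₀ hs₀ (by omega))
  have hstep : expandPerm T s₀ hs₀ τ t.1 = startpt T s₀ hs₀ e := by
    rw [expandPerm_apply_not_mem T s₀ hs₀ τ t.2, Subtype.coe_eta, ht,
      Equiv.apply_symm_apply]
  have hy2 : (expandPerm T s₀ hs₀ τ ^ (ufun T s₀ hs₀ e - dfun T s₀ hs₀ y))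
      (startpt T s₀ hs₀ e) = y := by
    rw [pow_eq_add T s₀ hs₀ harc' _ _ (by rw [dfun_startpt T s₀ hs₀ hy']; omega)]
    rw [Nat.cast_sub hdu, startpt, he, endpt]
    ring
  refine ⟨((ufun T s₀ hs₀ e - dfun T s₀ hs₀ y) + 1 + i) + dfun T s₀ hs₀ x, ?_⟩
  rw [pow_add, Equiv.Perm.mul_apply, hx1, pow_add, Equiv.Perm.mul_apply, hi, hk,
    pow_add, Equiv.Perm.mul_apply, pow_one, hstep, hy2]

noncomputable def contractEquiv :
    {σ : Equiv.Perm (Fin (n + 1)) // IsFullCycle σ ∧ ∀ i ∈ T, σ i = cyclicSucc i}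
      ≃ {τ : Equiv.Perm {x : Fin (n + 1) // x ∉ T} // FullOn τ} where
  toFun σh := ⟨contractPerm T s₀ hs₀ (fun i hi => by rw [σh.2.2 i hi, cyclicSucc_eq]),
    contractPerm_fullOn T s₀ hs₀ _ σh.2.1⟩
  invFun τh := ⟨expandPerm T s₀ hs₀ τh.1, expandPerm_fullOn T s₀ hs₀ τh.1 τh.2,
    fun i hi => by rw [expandPerm_apply_mem T s₀ hs₀ τh.1 hi, cyclicSucc_eq]⟩
  left_inv := by
    rintro ⟨σ, hfull, harc⟩
    have harc' : ∀ i ∈ T, σ i = i + 1 := fun i hi => by rw [harc i hi, cyclicSucc_eq]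
    apply Subtype.ext
    apply Equiv.ext
    intro x
    by_cases hx : x ∈ T
    · rw [expandPerm_apply_mem T s₀ hs₀ _ hx, harc' x hx]
    · rw [expandPerm_apply_not_mem T s₀ hs₀ _ hx]
      show startpt T s₀ hs₀ (endpt T s₀ hs₀ (σ x)) = σ x
      exact startpt_endpt T s₀ hs₀ (pred_image_not_mem T s₀ hs₀ harc' hx)
  right_inv := by
    rintro ⟨τ, hτ⟩
    apply Subtype.ext
    apply Equiv.ext
    intro s
    apply Subtype.ext
    show endpt T s₀ hs₀ (expandPerm T s₀ hs₀ τ s.1) = (τ s).1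
    rw [expandPerm_apply_not_mem T s₀ hs₀ τ s.2, Subtype.coe_eta]
    exact endpt_startpt T s₀ hs₀ (τ s).2

end Contract

theorem cnt_eq (j : ℕ) (T : Finset (Fin j)) :
    Nat.card {σ : Equiv.Perm (Fin j) // IsFullCycle σ ∧ ∀ i ∈ T, σ i = cyclicSucc i}
      = (j - 1 - T.card)! := by
  rcases j with _ | n
  · have hall : ∀ σ : Equiv.Perm (Fin 0), IsFullCycle σ ∧ ∀ i ∈ T, σ i = cyclicSucc i :=
      fun σ => ⟨fun x => x.elim0, fun i _ => i.elim0⟩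
    rw [Nat.card_congr (Equiv.subtypeUnivEquiv hall), Nat.card_eq_fintype_card,
      Fintype.card_perm]
    simp
  · by_cases hT : T = Finset.univ
    · subst hT
      have hcyc : ∀ k : Fin (n + 1), finRotate (n + 1) k = cyclicSucc k := fun k => by
        rw [cyclicSucc_eq, finRotate_succ_apply]
      have hpow : ∀ (i : ℕ) (x : Fin (n + 1)),
          ((finRotate (n + 1)) ^ i) x = x + ((i : ℕ) : Fin (n + 1)) := by
        intro i
        induction i with
        | zero => intro x; simp
        | succ i ih =>
          intro x
          rw [_root_.pow_succ, Equiv.Perm.mul_apply, ih (finRotate (n + 1) x),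
            finRotate_succ_apply]
          push_cast
          ring
      have hfull : IsFullCycle (finRotate (n + 1)) := by
        intro x y
        exact ⟨((y - x : Fin (n + 1)) : ℕ), by rw [hpow, Fin.cast_val_eq_self]; ring⟩
      haveI : Unique {σ : Equiv.Perm (Fin (n + 1)) //
          IsFullCycle σ ∧ ∀ i ∈ Finset.univ, σ i = cyclicSucc i} := {
        default := ⟨finRotate (n + 1), hfull, fun i _ => hcyc i⟩
        uniq := by
          rintro ⟨σ, h1, h2⟩
          apply Subtype.ext
          apply Equiv.ext
          intro k
          show σ k = finRotate (n + 1) k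
          rw [h2 k (Finset.mem_univ k), hcyc] }
      rw [Nat.card_unique, Finset.card_univ, Fintype.card_fin,
        show n + 1 - 1 - (n + 1) = 0 from by omega]
      rfl
    · obtain ⟨s₀, hs₀⟩ : ∃ s, s ∉ T := by
        by_contra hc
        push_neg at hc
        exact hT (Finset.eq_univ_iff_forall.mpr hc)
      rw [Nat.card_congr (contractEquiv T s₀ hs₀),
        card_fullOn (⟨s₀, hs₀⟩ : {x : Fin (n + 1) // x ∉ T})]
      have hcard : Fintype.card {x : Fin (n + 1) // x ∉ T} = (n + 1) - T.card := by
        rw [← Nat.card_eq_fintype_card,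
          Nat.card_congr (Equiv.subtypeEquivRight (q := fun x => x ∈ Tᶜ) (fun x => by simp)),
          Nat.card_eq_finsetCard, Finset.card_compl, Fintype.card_fin]
      rw [hcard]
      congr 1
      omega

theorem filter_count (j : ℕ) (t : Finset (Fin j)) :
    ((Finset.univ.filter (fun σ : Equiv.Perm (Fin j) => IsFullCycle σ)).filter
      (fun σ => t ⊆ Finset.univ.filter (fun k => σ k = cyclicSucc k))).card
      = (j - 1 - t.card)! := by
  rw [Finset.filter_filter]
  rw [Finset.filter_congr (fun σ (_ : σ ∈ Finset.univ) => (by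
    apply and_congr_right'
    simp [Finset.subset_iff] :
      (IsFullCycle σ ∧ t ⊆ Finset.univ.filter (fun k => σ k = cyclicSucc k))
        ↔ (IsFullCycle σ ∧ ∀ i ∈ t, σ i = cyclicSucc i)))]
  rw [← cnt_eq j t, Nat.card_eq_fintype_card, Fintype.card_subtype]

theorem ncard_int (j : ℕ) :
    (({σ : Equiv.Perm (Fin j) | IsFullCycle σ ∧ ∀ k, σ k ≠ cyclicSucc k}.ncard : ℤ))
      = ∑ k ∈ Finset.range (j + 1), (-1 : ℤ) ^ k * (j.choose k) * ((j - 1 - k)! : ℤ) := by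
  have h1 : {σ : Equiv.Perm (Fin j) | IsFullCycle σ ∧ ∀ k, σ k ≠ cyclicSucc k}.ncard
      = ((Finset.univ.filter (fun σ : Equiv.Perm (Fin j) => IsFullCycle σ)).filter
          (fun σ => Finset.univ.filter (fun k => σ k = cyclicSucc k) = ∅)).card := by
    rw [Set.ncard_eq_toFinset_card', Set.toFinset_setOf, Finset.filter_filter]
    congr 1
    apply Finset.filter_congr
    intro σ _
    simp [Finset.filter_eq_empty_iff]
  rw [h1, Finset.card_filter]
  push_cast
  have h2 : ∀ σ ∈ Finset.univ.filter (fun σ : Equiv.Perm (Fin j) => IsFullCycle σ),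
      (if Finset.univ.filter (fun k => σ k = cyclicSucc k) = ∅ then (1 : ℤ) else 0)
        = ∑ t ∈ (Finset.univ.filter (fun k => σ k = cyclicSucc k)).powerset,
            (-1 : ℤ) ^ t.card := by
    intro σ _
    rw [Finset.sum_powerset_neg_one_pow_card]
  rw [Finset.sum_congr rfl h2]
  have h3 : ∀ σ : Equiv.Perm (Fin j),
      ∑ t ∈ (Finset.univ.filter (fun k => σ k = cyclicSucc k)).powerset, (-1 : ℤ) ^ t.card
        = ∑ t ∈ (Finset.univ : Finset (Fin j)).powerset,
            if t ⊆ Finset.univ.filter (fun k => σ k = cyclicSucc k)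
            then (-1 : ℤ) ^ t.card else 0 := by
    intro σ
    rw [← Finset.sum_filter]
    congr 1
    ext t
    simp only [Finset.mem_filter, Finset.mem_powerset]
    constructor
    · intro h; exact ⟨Finset.subset_univ t, h⟩
    · intro h; exact h.2
  rw [Finset.sum_congr rfl (fun σ _ => h3 σ), Finset.sum_comm]
  have h4 : ∀ t ∈ (Finset.univ : Finset (Fin j)).powerset,
      (∑ σ ∈ Finset.univ.filter (fun σ : Equiv.Perm (Fin j) => IsFullCycle σ),
        if t ⊆ Finset.univ.filter (fun k => σ k = cyclicSucc k)
        then (-1 : ℤ) ^ t.card else 0)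
        = (-1 : ℤ) ^ t.card * ((j - 1 - t.card)! : ℤ) := by
    intro t _
    rw [← Finset.sum_filter, Finset.sum_const, filter_count j t, nsmul_eq_mul, mul_comm]
  rw [Finset.sum_congr rfl h4, Finset.powerset_card_disjiUnion]
  refine (Finset.sum_disjiUnion _ _ _).trans ?_
  apply Finset.sum_congr (by rw [Finset.card_univ, Fintype.card_fin])
  intro k _
  rw [Finset.sum_congr rfl (fun t ht => by
      rw [(Finset.mem_powersetCard.mp ht).2]),
    Finset.sum_const, Finset.card_powersetCard, Finset.card_univ, Fintype.card_fin,
    nsmul_eq_mul]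
  push_cast
  ring

theorem asc_eq {n k : ℕ} (hk : k ≤ n) :
    (k + 1).ascFactorial (n - k) = n.choose k * (n - k)! := by
  have h1 : k ! * ((k + 1).ascFactorial (n - k)) = k ! * (n.choose k * (n - k)!) := by
    rw [Nat.factorial_mul_ascFactorial, show k + (n - k) = n from by omega,
      ← Nat.choose_mul_factorial_mul_factorial hk]
    ring
  exact Nat.eq_of_mul_eq_mul_left (Nat.factorial_pos k) h1

theorem key (n : ℕ) : (numDerangements n : ℤ)
    = (∑ k ∈ Finset.range (n + 1), (-1 : ℤ) ^ k * (n.choose k) * ((n - 1 - k)! : ℤ))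
    + (∑ k ∈ Finset.range (n + 1 + 1),
        (-1 : ℤ) ^ k * ((n + 1).choose k) * ((n + 1 - 1 - k)! : ℤ)) := by
  set g : ℕ → ℤ := fun k => (-1 : ℤ) ^ k * (n.choose k) * ((n - k)! : ℤ) with hgdef
  set b : ℕ → ℤ := fun k => (-1 : ℤ) ^ k * (n.choose k) * ((n - 1 - k)! : ℤ) with hbdef
  set f : ℕ → ℤ := fun k => (-1 : ℤ) ^ k * ((n + 1).choose k) * ((n - k)! : ℤ) with hfdef
  have hE : (numDerangements n : ℤ) = ∑ k ∈ Finset.range (n + 1), g k := by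
    rw [numDerangements_sum]
    apply Finset.sum_congr rfl
    intro k hk
    rw [asc_eq (Finset.mem_range_succ_iff.mp hk)]
    push_cast [hgdef]
    ring
  have hBsucc : ∀ k, (-1 : ℤ) ^ k * ((n + 1).choose k) * ((n + 1 - 1 - k)! : ℤ) = f k := by
    intro k
    rw [hfdef, show n + 1 - 1 - k = n - k from by omega]
  rw [Finset.sum_congr rfl (fun k _ => hBsucc k)]
  have hterm : ∀ k, f (k + 1) = g (k + 1) - b k := by
    intro k
    show (-1 : ℤ) ^ (k + 1) * ((n + 1).choose (k + 1)) * ((n - (k + 1))! : ℤ) = _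
    rw [Nat.choose_succ_succ, show n - (k + 1) = n - 1 - k from by omega, hgdef, hbdef]
    show _ = (-1 : ℤ) ^ (k + 1) * (n.choose (k + 1)) * ((n - (k + 1))! : ℤ)
      - (-1 : ℤ) ^ k * (n.choose k) * ((n - 1 - k)! : ℤ)
    rw [show n - (k + 1) = n - 1 - k from by omega]
    push_cast
    ring
  have hf0 : f 0 = (n ! : ℤ) := by simp [hfdef]
  have hg0 : g 0 = (n ! : ℤ) := by simp [hgdef]
  have hgtop : g (n + 1) = 0 := by simp [hgdef, Nat.choose_succ_self]
  have hsum : ∑ k ∈ Finset.range (n + 1 + 1), f k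
      = (∑ k ∈ Finset.range (n + 1), g k) - (∑ k ∈ Finset.range (n + 1), b k) := by
    rw [Finset.sum_range_succ' f (n + 1),
      Finset.sum_congr rfl (fun k _ => hterm k), Finset.sum_sub_distrib, hf0]
    have h5 := Finset.sum_range_succ' g (n + 1)
    have h6 := Finset.sum_range_succ g (n + 1)
    rw [h6, hgtop, add_zero] at h5
    have h7 : ∑ k ∈ Finset.range (n + 1), g (k + 1)
        = (∑ k ∈ Finset.range (n + 1), g k) - g 0 := by rw [h5]; ring
    rw [h7, hg0]
    ring
  rw [hE, hsum]
  ring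

end Stmt13Aux

/-- The number of derangements `D(n)` of `[n]` satisfies
`D(n) = #{σ ∈ C_n : Θ_n(σ) = ∅} + #{σ ∈ C_{n+1} : Θ_{n+1}(σ) = ∅}`, where `C_j` is the
set of full `j`-cycles in `S_j` and `Θ_j(σ) = {k ∈ [j] : σ(k) = k+1 mod j}`. -/
theorem stmt13 (n : ℕ) :
    numDerangements n
    =
    Set.ncard {σ : Equiv.Perm (Fin n) | IsFullCycle σ ∧
        ∀ k : Fin n, σ k ≠ cyclicSucc k}
    + Set.ncard {σ : Equiv.Perm (Fin (n + 1)) | IsFullCycle σ ∧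
        ∀ k : Fin (n + 1), σ k ≠ cyclicSucc k} := by
  have h : (numDerangements n : ℤ)
      = (Set.ncard {σ : Equiv.Perm (Fin n) | IsFullCycle σ ∧
            ∀ k : Fin n, σ k ≠ cyclicSucc k} : ℤ)
        + (Set.ncard {σ : Equiv.Perm (Fin (n + 1)) | IsFullCycle σ ∧
            ∀ k : Fin (n + 1), σ k ≠ cyclicSucc k} : ℤ) := by
    rw [Stmt13Aux.ncard_int n, Stmt13Aux.ncard_int (n + 1)]
    exact Stmt13Aux.key n
  exact_mod_cast h
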